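/- Let H = diag(ε₁, ε₂) with ε₁, ε₂ ∈ {1, -1}. A nonzero 2×2 complex matrix A is H-selfadjoint and satisfies A² = 0 if and only if ε₁ = -ε₂ and A = [[α, -β̄],[β, -α]] for some real α and complex β with |β| = |α|, β ≠ 0 or α ≠ 0. In particular, if ε₁ = ε₂ then the only H-selfadjoint square root of the 2×2 zero matrix is the zero matrix. -/

import Mathlib

open Matrix

lemma same_sign_key (ε₁ ε₂ : ℝ) (hee : ε₁ = ε₂) (hne : (ε₁:ℂ) ≠ 0)
    (A : Matrix (Fin 2) (Fin 2) ℂ)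
    (hH : (!![(ε₁ : ℂ), 0; 0, (ε₂ : ℂ)]) * A = Aᴴ * !![(ε₁ : ℂ), 0; 0, (ε₂ : ℂ)])
    (hsq : A ^ 2 = 0) : A = 0 := by
  subst hee
  have E00 := congrFun (congrFun hH 0) 0
  have E01 := congrFun (congrFun hH 0) 1
  have E11 := congrFun (congrFun hH 1) 1
  simp [Matrix.mul_apply, Fin.sum_univ_two, Matrix.conjTranspose_apply] at E00 E01 E11
  rw [pow_two] at hsq
  have S00 := congrFun (congrFun hsq 0) 0
  have S11 := congrFun (congrFun hsq 1) 1
  simp [Matrix.mul_apply, Fin.sum_univ_two] at S00 S11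
  have ha : A 0 0 = (starRingEnd ℂ) (A 0 0) := by
    apply mul_left_cancel₀ hne; rw [E00]; ring
  have hb : A 0 1 = (starRingEnd ℂ) (A 1 0) := by
    apply mul_left_cancel₀ hne; rw [E01]; ring
  have haim : (A 0 0).im = 0 := by
    have := congrArg Complex.im ha; simp at this; linarith
  rw [hb] at S00
  have S00' : (A 0 0).re ^2 + (A 1 0).re^2 + (A 1 0).im^2 = 0 := by
    have := congrArg Complex.re S00
    simp [Complex.mul_re, haim] at this
    nlinarith [this]
  have h1 : (A 0 0).re = 0 := by
    nlinarith [sq_nonneg (A 1 0).re, sq_nonneg (A 1 0).im, sq_nonneg (A 0 0).re]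
  have hc0 : A 1 0 = 0 := by
    apply Complex.ext <;> simp only [Complex.zero_re, Complex.zero_im] <;>
      nlinarith [sq_nonneg (A 1 0).re, sq_nonneg (A 1 0).im, sq_nonneg (A 0 0).re]
  have ha0 : A 0 0 = 0 := Complex.ext h1 haim
  have hb0 : A 0 1 = 0 := by rw [hb, hc0]; simp
  have hd0 : A 1 1 = 0 := by
    rw [hc0] at S11
    have : A 1 1 * A 1 1 = 0 := by linear_combination S11
    rcases mul_eq_zero.mp this with h|h <;> exact h
  rw [Matrix.eta_fin_two A, ha0, hb0, hc0, hd0]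
  ext i j; fin_cases i <;> fin_cases j <;> simp

lemma opp_forward (ε₁ ε₂ : ℝ) (hee : ε₁ = -ε₂) (hne : (ε₁:ℂ) ≠ 0)
    (A : Matrix (Fin 2) (Fin 2) ℂ) (hA : A ≠ 0)
    (hH : (!![(ε₁ : ℂ), 0; 0, (ε₂ : ℂ)]) * A = Aᴴ * !![(ε₁ : ℂ), 0; 0, (ε₂ : ℂ)])
    (hsq : A ^ 2 = 0) :
    ∃ (α : ℝ) (β : ℂ), ‖β‖ = |α| ∧ (β ≠ 0 ∨ α ≠ 0) ∧
      A = !![(α : ℂ), -(starRingEnd ℂ) β; β, -(α : ℂ)] := by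
  have hεc : (ε₂ : ℂ) = -(ε₁ : ℂ) := by rw [hee]; push_cast; ring
  have E00 := congrFun (congrFun hH 0) 0
  have E01 := congrFun (congrFun hH 0) 1
  simp [Matrix.mul_apply, Fin.sum_univ_two, Matrix.conjTranspose_apply] at E00 E01
  rw [pow_two] at hsq
  have S00 := congrFun (congrFun hsq 0) 0
  have S10 := congrFun (congrFun hsq 1) 0
  have S11 := congrFun (congrFun hsq 1) 1
  simp [Matrix.mul_apply, Fin.sum_univ_two] at S00 S10 S11
  have ha : A 0 0 = (starRingEnd ℂ) (A 0 0) := by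
    apply mul_left_cancel₀ hne; rw [E00]; ring
  have hb : A 0 1 = -(starRingEnd ℂ) (A 1 0) := by
    apply mul_left_cancel₀ hne; rw [E01, hεc]; ring
  have haim : (A 0 0).im = 0 := by
    have := congrArg Complex.im ha; simp at this; linarith
  have ha' : A 0 0 = ((A 0 0).re : ℂ) := by
    rw [Complex.ext_iff]; simp [haim]
  refine ⟨(A 0 0).re, A 1 0, ?_, ?_, ?_⟩
  · rw [hb] at S00
    have := congrArg Complex.re S00
    rw [ha'] at this
    simp [Complex.mul_re, Complex.normSq_apply] at this
    have h2 : ‖A 1 0‖ ^ 2 = |(A 0 0).re| ^ 2 := by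
      rw [Complex.sq_norm, sq_abs, Complex.normSq_apply]; nlinarith [this]
    nlinarith [norm_nonneg (A 1 0), abs_nonneg (A 0 0).re, h2]
  · by_contra h
    push_neg at h
    obtain ⟨hc0, hα0⟩ := h
    apply hA
    have ha0 : A 0 0 = 0 := by rw [ha']; simp [hα0]
    have hb0 : A 0 1 = 0 := by rw [hb, hc0]; simp
    have hd0 : A 1 1 = 0 := by
      rw [hc0] at S11
      have : A 1 1 * A 1 1 = 0 := by linear_combination S11
      rcases mul_eq_zero.mp this with h|h <;> exact h
    rw [Matrix.eta_fin_two A, ha0, hb0, hc0, hd0]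
    ext i j; fin_cases i <;> fin_cases j <;> simp
  · have hd : A 1 1 = -((A 0 0).re : ℂ) := by
      by_cases hc : A 1 0 = 0
      · rw [hb, hc] at S00
        have ha0 : A 0 0 = 0 := by
          have : A 0 0 * A 0 0 = 0 := by rw [← S00]; simp
          rcases mul_eq_zero.mp this with h|h <;> exact h
        have hd0 : A 1 1 = 0 := by
          rw [hc] at S11
          have : A 1 1 * A 1 1 = 0 := by linear_combination S11
          rcases mul_eq_zero.mp this with h|h <;> exact h
        rw [hd0, ← ha', ha0]; simp
      · have : A 1 0 * (A 0 0 + A 1 1) = 0 := by linear_combination S10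
        rcases mul_eq_zero.mp this with h|h
        · exact absurd h hc
        · rw [← ha']; linear_combination h
    ext i j
    fin_cases i <;> fin_cases j <;> simp <;>
      first | exact ha' | exact hb | exact hd

lemma opp_reverse (ε₁ ε₂ : ℝ) (hee : ε₁ = -ε₂) (α : ℝ) (β : ℂ)
    (habs : ‖β‖ = |α|) :
    (!![(ε₁ : ℂ), 0; 0, (ε₂ : ℂ)]) * !![(α : ℂ), -(starRingEnd ℂ) β; β, -(α : ℂ)] =
      (!![(α : ℂ), -(starRingEnd ℂ) β; β, -(α : ℂ)])ᴴ * !![(ε₁ : ℂ), 0; 0, (ε₂ : ℂ)] ∧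
    (!![(α : ℂ), -(starRingEnd ℂ) β; β, -(α : ℂ)]) ^ 2 = 0 := by
  have hεc : (ε₂ : ℂ) = -(ε₁ : ℂ) := by rw [hee]; push_cast; ring
  have hn : (starRingEnd ℂ) β * β = (α : ℂ) * α := by
    rw [mul_comm, Complex.mul_conj, ← Complex.sq_norm, habs]
    push_cast [sq_abs]
    ring
  constructor
  · have hT : (!![(α : ℂ), -(starRingEnd ℂ) β; β, -(α : ℂ)])ᴴ =
        !![(α:ℂ), (starRingEnd ℂ) β; -β, -(α:ℂ)] := by
      rw [Matrix.eta_fin_two (!![(α : ℂ), -(starRingEnd ℂ) β; β, -(α : ℂ)])ᴴ]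
      simp [Matrix.conjTranspose_apply, Complex.conj_ofReal]
    rw [hT, Matrix.mul_fin_two, Matrix.mul_fin_two]
    ext i j
    fin_cases i <;> fin_cases j
    · show (ε₁:ℂ) * α + 0 * β = (α:ℂ) * ε₁ + (starRingEnd ℂ) β * 0
      ring
    · show (ε₁:ℂ) * -(starRingEnd ℂ) β + 0 * -(α:ℂ) =
        (α:ℂ) * 0 + (starRingEnd ℂ) β * ε₂
      rw [hεc]; ring
    · show (0:ℂ) * α + ε₂ * β = -β * ε₁ + -(α:ℂ) * 0
      rw [hεc]; ring
    · show (0:ℂ) * -(starRingEnd ℂ) β + (ε₂:ℂ) * -(α:ℂ) = -β * 0 + -(α:ℂ) * ε₂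
      ring
  · rw [pow_two, Matrix.mul_fin_two]
    ext i j
    fin_cases i <;> fin_cases j
    · show (α:ℂ) * α + -(starRingEnd ℂ) β * β = (0:ℂ)
      linear_combination -hn
    · show (α:ℂ) * -(starRingEnd ℂ) β + -(starRingEnd ℂ) β * -(α:ℂ) = (0:ℂ)
      ring
    · show β * (α:ℂ) + -(α:ℂ) * β = (0:ℂ)
      ring
    · show β * -(starRingEnd ℂ) β + -(α:ℂ) * -(α:ℂ) = (0:ℂ)
      linear_combination -hn

theorem H_selfadjoint_sq_roots_of_zero_2x2 (ε₁ ε₂ : ℝ)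
    (h₁ : ε₁ = 1 ∨ ε₁ = -1) (h₂ : ε₂ = 1 ∨ ε₂ = -1) :
    (∀ A : Matrix (Fin 2) (Fin 2) ℂ, A ≠ 0 →
      (((!![(ε₁ : ℂ), 0; 0, (ε₂ : ℂ)]) * A = Aᴴ * !![(ε₁ : ℂ), 0; 0, (ε₂ : ℂ)] ∧ A ^ 2 = 0) ↔
        (ε₁ = -ε₂ ∧ ∃ (α : ℝ) (β : ℂ), ‖β‖ = |α| ∧ (β ≠ 0 ∨ α ≠ 0) ∧
          A = !![(α : ℂ), -(starRingEnd ℂ) β; β, -(α : ℂ)]))) ∧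
    (ε₁ = ε₂ → ∀ A : Matrix (Fin 2) (Fin 2) ℂ,
      (!![(ε₁ : ℂ), 0; 0, (ε₂ : ℂ)]) * A = Aᴴ * !![(ε₁ : ℂ), 0; 0, (ε₂ : ℂ)] →
      A ^ 2 = 0 → A = 0) := by
  have hne : (ε₁ : ℂ) ≠ 0 := by rcases h₁ with h|h <;> simp [h]
  constructor
  · intro A hA
    constructor
    · rintro ⟨hH, hsq⟩
      rcases h₁ with he1|he1 <;> rcases h₂ with he2|he2
      · exact absurd (same_sign_key ε₁ ε₂ (by rw [he1, he2]) hne A hH hsq) hA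
      · exact ⟨by rw [he1, he2]; try norm_num,
          opp_forward ε₁ ε₂ (by rw [he1, he2]; try norm_num) hne A hA hH hsq⟩
      · exact ⟨by rw [he1, he2]; try norm_num,
          opp_forward ε₁ ε₂ (by rw [he1, he2]; try norm_num) hne A hA hH hsq⟩
      · exact absurd (same_sign_key ε₁ ε₂ (by rw [he1, he2]) hne A hH hsq) hA
    · rintro ⟨hee, α, β, habs, -, rfl⟩
      exact opp_reverse ε₁ ε₂ hee α β habs
  · intro hee A hH hsq
    exact same_sign_key ε₁ ε₂ hee hne A hH hsq
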